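/- Let (F_s)_{s≥0} be a filtration on a probability space and let (ζ_s)_{s≥0} be an (F_s)-adapted ℤ-valued process with right-continuous sample paths such that ζ_0 = x almost surely, where x ≤ 0 is an integer. Let θ > 0 and α > 0 satisfy μ := αθ − 2(cosh θ − 1) > 0, and assume that the process M_s := exp(θ ζ_s − 2(cosh θ − 1)s) is an (F_s)-martingale. Then for every t ≥ 0, P(there exists s ≥ t with ζ_s ≥ α s) ≤ e^{θx} e^{−μt}. -/

import Mathlib

open MeasureTheory Filter
open scoped NNReal ENNReal
open Topology

/-- Maximal inequality for a nonnegative continuous-time martingale over a countable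
family of times. -/
theorem aux_max {Ω : Type*} {mΩ : MeasurableSpace Ω} {ℙ : Measure Ω} [IsProbabilityMeasure ℙ]
    (𝓕 : Filtration ℝ≥0 mΩ) (M : ℝ≥0 → Ω → ℝ) (hM : Martingale M 𝓕 ℙ)
    (hpos : ∀ s ω, 0 ≤ M s ω) (e : ℕ → ℝ≥0) (c : ℝ≥0) :
    (c : ℝ≥0∞) * ℙ (⋃ k, {ω | (c : ℝ) ≤ M (e k) ω}) ≤ ENNReal.ofReal (∫ ω, M 0 ω ∂ℙ) := by
  set B : ℕ → Set Ω := fun k => {ω | (c : ℝ) ≤ M (e k) ω} with hB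
  have hint0 : ∀ s : ℝ≥0, ∫ ω, M s ω ∂ℙ = ∫ ω, M 0 ω ∂ℙ := by
    intro s
    have h1 := hM.2 0 s zero_le
    have h2 : ∫ ω, (ℙ[M s | 𝓕 0]) ω ∂ℙ = ∫ ω, M s ω ∂ℙ := integral_condExp (𝓕.le 0)
    rw [← h2]
    exact integral_congr_ae h1
  rw [measure_iUnion_eq_iSup_accumulate, ENNReal.mul_iSup]
  refine iSup_le fun n => ?_
  -- sorted enumeration of the times e 0, ..., e n
  set F : Finset ℝ≥0 := (Finset.range (n + 1)).image e with hF
  have hFne : F.Nonempty := ⟨e 0, Finset.mem_image_of_mem e (Finset.mem_range.2 (Nat.succ_pos n))⟩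
  have hm : 0 < F.card := Finset.card_pos.2 hFne
  have hcardle : F.card ≤ n + 1 := (Finset.card_image_le).trans (by simp)
  set τ : ℕ → ℝ≥0 := fun k => (F.orderIsoOfFin rfl ⟨min k (F.card - 1), by omega⟩ : F) with hτdef
  have hτ : Monotone τ := by
    intro i j hij
    exact (F.orderIsoOfFin rfl).monotone (by simp [Fin.le_def]; omega)
  -- the discretized filtration and martingale
  set 𝒢 : Filtration ℕ mΩ := ⟨fun k => 𝓕 (τ k), fun i j hij => 𝓕.mono (hτ hij), fun k => 𝓕.le _⟩
    with h𝒢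
  have hg : Martingale (fun k => M (τ k)) 𝒢 ℙ :=
    ⟨fun k => hM.1 (τ k), fun i j hij => hM.2 (τ i) (τ j) (hτ hij)⟩
  have hmax := maximal_ineq hg.submartingale (fun k ω => hpos (τ k) ω) (ε := c) n
  have hsub : Set.accumulate B n ⊆
      {ω | (c : ℝ) ≤ (Finset.range (n + 1)).sup' Finset.nonempty_range_add_one
        fun k => M (τ k) ω} := by
    intro ω hω
    rw [Set.mem_accumulate] at hω
    obtain ⟨k, hk, hωk⟩ := hω
    -- e k = τ j for some j ≤ n
    have hek : e k ∈ F := Finset.mem_image_of_mem e (Finset.mem_range.2 (Nat.lt_succ_of_le hk))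
    obtain ⟨i, hi⟩ := (F.orderIsoOfFin rfl).surjective ⟨e k, hek⟩
    have hi2 := i.2
    have hi1 : i.1 < n + 1 := lt_of_lt_of_le hi2 hcardle
    have harg : (⟨min i.1 (F.card - 1), by omega⟩ : Fin F.card) = i := by
      apply Fin.ext; simp only; omega
    have hij : τ i.1 = e k := by
      have h2 : τ i.1 = ((F.orderIsoOfFin rfl i : F) : ℝ≥0) :=
        congrArg (fun m : Fin F.card => ((F.orderIsoOfFin rfl m : F) : ℝ≥0)) harg
      rw [h2, hi]
    simp only [Set.mem_setOf_eq]
    rw [Finset.le_sup'_iff]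
    exact ⟨i.1, Finset.mem_range.2 hi1, by rw [hij]; exact hωk⟩
  -- end of hsub
  calc (c : ℝ≥0∞) * ℙ (Set.accumulate B n)
      ≤ (c : ℝ≥0∞) * ℙ {ω | (c : ℝ) ≤ (Finset.range (n + 1)).sup' Finset.nonempty_range_add_one
          fun k => M (τ k) ω} := mul_le_mul_right (measure_mono hsub) _
    _ ≤ ENNReal.ofReal (∫ ω in {ω | (c : ℝ) ≤ (Finset.range (n + 1)).sup'
          Finset.nonempty_range_add_one fun k => M (τ k) ω}, M (τ n) ω ∂ℙ) := by exact hmax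
    _ ≤ ENNReal.ofReal (∫ ω, M (τ n) ω ∂ℙ) := by
        apply ENNReal.ofReal_le_ofReal
        exact setIntegral_le_integral (hg.integrable n) (Eventually.of_forall fun ω => hpos _ ω)
    _ = ENNReal.ofReal (∫ ω, M 0 ω ∂ℙ) := by rw [hint0]

/-- **Lemma 2 of Bérard–Ramírez.** Exponential-martingale crossing estimate: if
`ζ` is an adapted, right-continuous `ℤ`-valued process started at `x ≤ 0` whose
exponential process `exp (θ ζ_s - 2(cosh θ - 1) s)` is a martingale, and
`μ := α θ - 2 (cosh θ - 1) > 0`, then for every `t ≥ 0` the probability that the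
process reaches the line of slope `α` at some time `s ≥ t` is at most
`e^{θ x} e^{-μ t}`. -/
theorem stmt_0
    {Ω : Type*} {mΩ : MeasurableSpace Ω} {ℙ : Measure Ω} [IsProbabilityMeasure ℙ]
    (𝓕 : Filtration ℝ≥0 mΩ)
    (ζ : ℝ≥0 → Ω → ℤ)
    (hadapt : Adapted 𝓕 ζ)
    (hrc : ∀ ω : Ω, ∀ s : ℝ≥0, ContinuousWithinAt (fun u => ζ u ω) (Set.Ici s) s)
    (x : ℤ) (hx : x ≤ 0)
    (h0 : ∀ᵐ ω ∂ℙ, ζ 0 ω = x)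
    (θ α : ℝ) (hθ : 0 < θ) (hα : 0 < α)
    (hμ : 0 < α * θ - 2 * (Real.cosh θ - 1))
    (hM : Martingale
      (fun (s : ℝ≥0) (ω : Ω) =>
        Real.exp (θ * (ζ s ω : ℝ) - 2 * (Real.cosh θ - 1) * (s : ℝ))) 𝓕 ℙ)
    (t : ℝ≥0) :
    ℙ {ω | ∃ s : ℝ≥0, t ≤ s ∧ α * (s : ℝ) ≤ (ζ s ω : ℝ)} ≤
      ENNReal.ofReal
        (Real.exp (θ * (x : ℝ)) *
          Real.exp (-(α * θ - 2 * (Real.cosh θ - 1)) * (t : ℝ))) := by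
  set K : ℝ := 2 * (Real.cosh θ - 1) with hKdef
  have hK0 : 0 ≤ K := by
    rw [hKdef]; nlinarith [Real.one_le_cosh θ]
  set μ0 : ℝ := α * θ - K with hμ0def
  set M : ℝ≥0 → Ω → ℝ := fun s ω => Real.exp (θ * (ζ s ω : ℝ) - K * (s : ℝ)) with hMdef
  have hMpos : ∀ s ω, 0 ≤ M s ω := fun s ω => (Real.exp_pos _).le
  -- expectation of M 0
  have hE0 : ∫ ω, M 0 ω ∂ℙ = Real.exp (θ * (x : ℝ)) := by
    have hcongr : (fun ω => M 0 ω) =ᵐ[ℙ] fun _ => Real.exp (θ * (x : ℝ)) := by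
      filter_upwards [h0] with ω hω
      simp [hMdef, hω]
    rw [integral_congr_ae hcongr]
    simp
  -- enumeration of the nonnegative rationals
  obtain ⟨f, hf⟩ := exists_surjective_nat ℚ
  set e : ℕ → ℝ≥0 := fun k => Real.toNNReal ((f k : ℚ) : ℝ) with hedef
  set A : Set Ω := {ω | ∃ s : ℝ≥0, t ≤ s ∧ α * (s : ℝ) ≤ (ζ s ω : ℝ)} with hA
  -- key estimate for every ε > 0
  have key : ∀ ε : ℝ, 0 < ε →
      ℙ A ≤ ENNReal.ofReal
        (Real.exp (θ * (x : ℝ)) * Real.exp (-(μ0 * (t : ℝ))) * Real.exp ε) := by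
    intro ε hε
    set c : ℝ≥0 := Real.toNNReal (Real.exp (μ0 * (t : ℝ) - ε)) with hcdef
    have hc : (c : ℝ) = Real.exp (μ0 * (t : ℝ) - ε) :=
      Real.coe_toNNReal _ (Real.exp_pos _).le
    -- inclusion into the union over rational times
    have hincl : A ⊆ ⋃ k, {ω | (c : ℝ) ≤ M (e k) ω} := by
      rintro ω ⟨s, hts, hαs⟩
      have hev : ∀ᶠ u in 𝓝[Set.Ici s] s, ζ u ω = ζ s ω :=
        (hrc ω s) ((isOpen_discrete {ζ s ω}).mem_nhds rfl)
      rw [eventually_nhdsWithin_iff, Metric.eventually_nhds_iff] at hev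
      obtain ⟨δ, hδ, hδ'⟩ := hev
      set η : ℝ := min δ (ε / (K + 1)) with hηdef
      have hη : 0 < η := lt_min hδ (div_pos hε (by linarith))
      obtain ⟨q, hq1, hq2⟩ := exists_rat_btwn (show (s : ℝ) < (s : ℝ) + η by linarith)
      have hq0 : (0 : ℝ) ≤ (q : ℝ) := le_trans s.coe_nonneg hq1.le
      obtain ⟨k, hk⟩ := hf q
      have hcoe : ((e k : ℝ≥0) : ℝ) = (q : ℝ) := by
        rw [hedef]; simp only [hk]; exact Real.coe_toNNReal _ hq0
      have hsu : s ≤ e k := by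
        rw [← NNReal.coe_le_coe, hcoe]; exact hq1.le
      have hdist : dist (e k) s < δ := by
        rw [NNReal.dist_eq, hcoe]
        rw [abs_of_nonneg (by linarith)]
        have : η ≤ δ := min_le_left _ _
        linarith
      have hζeq : ζ (e k) ω = ζ s ω := hδ' hdist hsu
      refine Set.mem_iUnion.2 ⟨k, ?_⟩
      simp only [Set.mem_setOf_eq, hc, hMdef, hζeq]
      rw [Real.exp_le_exp]
      -- arithmetic
      have h1 : θ * (α * (s : ℝ)) ≤ θ * ((ζ s ω : ℤ) : ℝ) :=
        mul_le_mul_of_nonneg_left hαs hθ.le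
      have h2 : ((e k : ℝ≥0) : ℝ) - (s : ℝ) ≤ ε / (K + 1) := by
        rw [hcoe]
        have : η ≤ ε / (K + 1) := min_le_right _ _
        linarith
      have h3 : K * (ε / (K + 1)) ≤ ε := by
        have h4 : K / (K + 1) ≤ 1 := div_le_one_of_le₀ (by linarith) (by linarith)
        calc K * (ε / (K + 1)) = ε * (K / (K + 1)) := by ring
          _ ≤ ε * 1 := mul_le_mul_of_nonneg_left h4 hε.le
          _ = ε := mul_one ε
      have h5 : K * (((e k : ℝ≥0) : ℝ) - (s : ℝ)) ≤ K * (ε / (K + 1)) :=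
        mul_le_mul_of_nonneg_left h2 hK0
      have h6 : μ0 * (t : ℝ) ≤ μ0 * (s : ℝ) := by
        have : (t : ℝ) ≤ (s : ℝ) := NNReal.coe_le_coe.2 hts
        exact mul_le_mul_of_nonneg_left this hμ.le
      have h7 : μ0 * (s : ℝ) = θ * (α * (s : ℝ)) - K * (s : ℝ) := by
        rw [hμ0def]; ring
      nlinarith [h1, h3, h5, h6]
    -- maximal inequality
    have hmax := aux_max 𝓕 M hM hMpos e c
    have hcne : (c : ℝ≥0∞) ≠ 0 := by
      simp only [ne_eq, ENNReal.coe_eq_zero, hcdef]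
      exact (Real.toNNReal_pos.2 (Real.exp_pos _)).ne'
    have hstep : ℙ A ≤ ENNReal.ofReal (∫ ω, M 0 ω ∂ℙ) / (c : ℝ≥0∞) := by
      rw [ENNReal.le_div_iff_mul_le (Or.inl hcne) (Or.inl ENNReal.coe_ne_top), mul_comm]
      exact le_trans (mul_le_mul_right (measure_mono hincl) _) hmax
    rw [hE0] at hstep
    have hcoe2 : (c : ℝ≥0∞) = ENNReal.ofReal (Real.exp (μ0 * (t : ℝ) - ε)) := rfl
    rw [hcoe2, ← ENNReal.ofReal_div_of_pos (Real.exp_pos _)] at hstep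
    refine hstep.trans (le_of_eq (congrArg _ ?_))
    rw [div_eq_mul_inv, ← Real.exp_neg, ← Real.exp_add, ← Real.exp_add, ← Real.exp_add]
    congr 1; ring
  -- pass to the limit ε → 0⁺
  have hgoal : ℙ A ≤ ENNReal.ofReal
      (Real.exp (θ * (x : ℝ)) * Real.exp (-(μ0 * (t : ℝ)))) := by
    have hcont : Continuous fun ε : ℝ =>
        ENNReal.ofReal (Real.exp (θ * (x : ℝ)) * Real.exp (-(μ0 * (t : ℝ))) * Real.exp ε) :=
      ENNReal.continuous_ofReal.comp (continuous_const.mul Real.continuous_exp)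
    have htend : Tendsto (fun ε : ℝ =>
        ENNReal.ofReal (Real.exp (θ * (x : ℝ)) * Real.exp (-(μ0 * (t : ℝ))) * Real.exp ε))
        (𝓝[>] (0 : ℝ)) (𝓝 (ENNReal.ofReal
          (Real.exp (θ * (x : ℝ)) * Real.exp (-(μ0 * (t : ℝ)))))) := by
      have h1 := ((hcont.tendsto 0).mono_left (nhdsWithin_le_nhds (s := Set.Ioi (0 : ℝ))))
      simpa using h1
    exact ge_of_tendsto htend
      (eventually_mem_nhdsWithin.mono fun ε hε => key ε hε)
  rw [neg_mul]
  exact hgoal
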